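/- arXiv:2010.09499 — 2 statements merged into one kernel-verified Lean document; each statement's English description precedes it below -/
import Mathlib

section
/- Define f : [0,1] → ℝ by: f(x) = x + (2^{−2n} − 2^{−n}) if x ∈ (2^{−n} − 2^{−2n}, 2^{−n} − 2^{−2n−1}], f(x) = 2^{−2n−1} if x ∈ (2^{−n} − 2^{−2n−1}, 2^{−n} + 2^{−2n−1}), f(x) = −x + (2^{−2n} + 2^{−n}) if x ∈ [2^{−n} + 2^{−2n−1}, 2^{−n} + 2^{−2n}), for n ≥ 3, and f(x) = 0 if x is in no interval J_n = (2^{−n} − 2^{−2n}, 2^{−n} + 2^{−2n}) with n ≥ 3. Then f is well defined (the intervals J_n, n ≥ 3, are pairwise disjoint), continuous, and 1-Lipschitz: |f(x) − f(y)| ≤ |x − y| for all x, y ∈ [0,1]. -/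
/-- The interval `J n = (2^{-n} - 2^{-2n}, 2^{-n} + 2^{-2n})`. -/
noncomputable def Jint (n : ℕ) : Set ℝ :=
  Set.Ioo ((2:ℝ) ^ (-(n : ℤ)) - (2:ℝ) ^ (-(2 * n : ℤ)))
          ((2:ℝ) ^ (-(n : ℤ)) + (2:ℝ) ^ (-(2 * n : ℤ)))

namespace Stmt13Aux

noncomputable def aa (n : ℕ) : ℝ := (2:ℝ) ^ (-(n : ℤ)) - (2:ℝ) ^ (-(2 * n : ℤ))
noncomputable def bb (n : ℕ) : ℝ := (2:ℝ) ^ (-(n : ℤ)) + (2:ℝ) ^ (-(2 * n : ℤ))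
noncomputable def hh (n : ℕ) : ℝ := (2:ℝ) ^ (-(2 * n : ℤ) - 1)
noncomputable def tt (n : ℕ) (x : ℝ) : ℝ := max 0 (min (min (x - aa n) (bb n - x)) (hh n))
noncomputable def gg (x : ℝ) : ℝ := ⨆ n : ℕ, tt (n + 3) x

lemma hh_eq (n : ℕ) : hh n = (2:ℝ) ^ (-(2 * n : ℤ)) / 2 := by
  rw [hh, zpow_sub_one₀ (two_ne_zero)]
  ring

lemma w_pos (n : ℕ) : (0:ℝ) < (2:ℝ) ^ (-(2 * n : ℤ)) := by positivity

lemma hh_pos (n : ℕ) : 0 < hh n := by rw [hh_eq]; linarith [w_pos n]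

lemma hh_le_one (n : ℕ) : hh n ≤ 1 := by
  have h1 : (2:ℝ) ^ (-(2 * n : ℤ)) ≤ (2:ℝ) ^ (0 : ℤ) :=
    zpow_le_zpow_right₀ one_le_two (by omega)
  rw [zpow_zero] at h1
  rw [hh_eq]
  linarith

lemma tt_nonneg (n : ℕ) (x : ℝ) : 0 ≤ tt n x := le_max_left _ _

lemma tt_le_one (n : ℕ) (x : ℝ) : tt n x ≤ 1 := by
  have h := hh_le_one n
  have h2 : min (min (x - aa n) (bb n - x)) (hh n) ≤ hh n := min_le_right _ _
  rw [tt]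
  rcases max_cases 0 (min (min (x - aa n) (bb n - x)) (hh n)) with ⟨he, _⟩ | ⟨he, _⟩ <;>
    rw [he] <;> linarith

lemma tt_lip (n : ℕ) : LipschitzWith 1 (tt n) := by
  have l1 : LipschitzWith 1 (fun x : ℝ => x - aa n) :=
    LipschitzWith.of_dist_le_mul fun x y => by
      rw [Real.dist_eq, Real.dist_eq, NNReal.coe_one, one_mul,
        show x - aa n - (y - aa n) = x - y by ring]
  have l2 : LipschitzWith 1 (fun x : ℝ => bb n - x) :=
    LipschitzWith.of_dist_le_mul fun x y => by
      rw [Real.dist_eq, Real.dist_eq, NNReal.coe_one, one_mul,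
        show bb n - x - (bb n - y) = -(x - y) by ring, abs_neg]
  have l3 := (l1.min l2).min_const (hh n)
  have l4 := l3.const_max 0
  show LipschitzWith 1 (fun x => max 0 (min (min (x - aa n) (bb n - x)) (hh n)))
  simpa [tt, max_self] using l4

lemma tt_eq_zero {n : ℕ} {x : ℝ} (hx : x ∉ Jint n) : tt n x = 0 := by
  have hx' : x ∉ Set.Ioo (aa n) (bb n) := hx
  rw [Set.mem_Ioo, not_and_or] at hx'
  have hmin : min (x - aa n) (bb n - x) ≤ 0 := by
    rcases hx' with h | h
    · push_neg at h
      exact le_trans (min_le_left _ _) (by linarith)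
    · push_neg at h
      exact le_trans (min_le_right _ _) (by linarith)
  have : min (min (x - aa n) (bb n - x)) (hh n) ≤ 0 :=
    le_trans (min_le_left _ _) hmin
  rw [tt, max_eq_left this]

lemma bb_le_aa {m n : ℕ} (hm : 3 ≤ m) (hmn : m < n) : bb n ≤ aa m := by
  have hq : (2:ℝ) ^ (-(m : ℤ)) ≤ 1 / 8 := by
    have h1 : (2:ℝ) ^ (-(m : ℤ)) ≤ (2:ℝ) ^ (-3 : ℤ) :=
      zpow_le_zpow_right₀ one_le_two (by omega)
    have h8 : (2:ℝ) ^ (-3 : ℤ) = 1 / 8 := by norm_num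
    rw [h8] at h1
    exact h1
  have hr : (2:ℝ) ^ (-(n : ℤ)) ≤ (2:ℝ) ^ (-(m : ℤ)) / 2 := by
    have h1 : (2:ℝ) ^ (-(n : ℤ)) ≤ (2:ℝ) ^ (-(m : ℤ) - 1) :=
      zpow_le_zpow_right₀ one_le_two (by omega)
    rw [zpow_sub_one₀ two_ne_zero] at h1
    have : (2:ℝ)⁻¹ = 1 / 2 := by norm_num
    rw [this] at h1
    linarith [h1]
  have hsq : ∀ k : ℕ, (2:ℝ) ^ (-(2 * k : ℤ)) = ((2:ℝ) ^ (-(k : ℤ))) ^ 2 := fun k => by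
    rw [show (-(2 * k : ℤ)) = (-(k : ℤ)) + (-(k : ℤ)) by ring,
      zpow_add₀ two_ne_zero, sq]
  have hqpos : (0:ℝ) < (2:ℝ) ^ (-(m : ℤ)) := by positivity
  have hrpos : (0:ℝ) < (2:ℝ) ^ (-(n : ℤ)) := by positivity
  rw [bb, aa, hsq m, hsq n]
  nlinarith [sq_nonneg ((2:ℝ) ^ (-(n : ℤ))), sq_nonneg ((2:ℝ) ^ (-(m : ℤ)))]

lemma disj {m n : ℕ} (hm : 3 ≤ m) (hn : 3 ≤ n) (hmn : m ≠ n) :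
    Disjoint (Jint m) (Jint n) := by
  have key : ∀ {p q : ℕ}, 3 ≤ p → p < q → Disjoint (Jint p) (Jint q) := by
    intro p q hp hpq
    refine Set.disjoint_left.2 fun x hxp hxq => ?_
    have h1 : aa p < x := hxp.1
    have h2 : x < bb q := hxq.2
    have := bb_le_aa hp hpq
    linarith
  rcases lt_or_gt_of_ne hmn with h | h
  · exact key hm h
  · exact (key hn h).symm

lemma gg_lip : LipschitzWith 1 gg := by
  apply LipschitzWith.of_dist_le_mul
  intro x y
  have bdd : ∀ z : ℝ, BddAbove (Set.range fun m : ℕ => tt (m + 3) z) := fun z =>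
    ⟨1, by rintro _ ⟨m, rfl⟩; exact tt_le_one _ _⟩
  have habs : ∀ m : ℕ, |tt (m + 3) x - tt (m + 3) y| ≤ |x - y| := fun m => by
    have := (tt_lip (m + 3)).dist_le_mul x y
    rwa [Real.dist_eq, Real.dist_eq, NNReal.coe_one, one_mul] at this
  rw [Real.dist_eq, Real.dist_eq, NNReal.coe_one, one_mul, abs_sub_le_iff]
  constructor
  · rw [sub_le_iff_le_add]
    apply ciSup_le
    intro m
    have h1 := (abs_sub_le_iff.1 (habs m)).1
    have h2 : tt (m + 3) y ≤ gg y := le_ciSup (bdd y) m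
    linarith
  · rw [sub_le_iff_le_add]
    apply ciSup_le
    intro m
    have h1 := (abs_sub_le_iff.1 (habs m)).2
    have h2 : tt (m + 3) x ≤ gg x := le_ciSup (bdd x) m
    linarith

lemma gg_eq_tt {n : ℕ} {x : ℝ} (hn : 3 ≤ n) (hx : x ∈ Jint n) : gg x = tt n x := by
  have bdd : BddAbove (Set.range fun m : ℕ => tt (m + 3) x) :=
    ⟨1, by rintro _ ⟨m, rfl⟩; exact tt_le_one _ _⟩
  apply le_antisymm
  · apply ciSup_le
    intro m
    by_cases hmn : m + 3 = n
    · rw [hmn]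
    · have hdisj := disj (by omega : 3 ≤ m + 3) hn hmn
      have hxm : x ∉ Jint (m + 3) := fun h => Set.disjoint_left.1 hdisj h hx
      rw [tt_eq_zero hxm]
      exact tt_nonneg _ _
  · have h := le_ciSup bdd (n - 3)
    rwa [show n - 3 + 3 = n by omega] at h

lemma gg_eq_zero {x : ℝ} (hx : ∀ n : ℕ, 3 ≤ n → x ∉ Jint n) : gg x = 0 := by
  have h : ∀ m : ℕ, tt (m + 3) x = 0 := fun m => tt_eq_zero (hx (m + 3) (by omega))
  simp [gg, h]

end Stmt13Aux

open Stmt13Aux in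
/-- the piecewise function f built from the bumps on the intervals
J_n (n ≥ 3) is well defined (the J_n are pairwise disjoint), continuous on [0,1],
and 1-Lipschitz. -/
theorem stmt_13 (f : ℝ → ℝ)
    (hf1 : ∀ n : ℕ, 3 ≤ n → ∀ x ∈ Set.Ioc ((2:ℝ) ^ (-(n : ℤ)) - (2:ℝ) ^ (-(2 * n : ℤ)))
        ((2:ℝ) ^ (-(n : ℤ)) - (2:ℝ) ^ (-(2 * n : ℤ) - 1)),
        f x = x + ((2:ℝ) ^ (-(2 * n : ℤ)) - (2:ℝ) ^ (-(n : ℤ))))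
    (hf2 : ∀ n : ℕ, 3 ≤ n → ∀ x ∈ Set.Ioo ((2:ℝ) ^ (-(n : ℤ)) - (2:ℝ) ^ (-(2 * n : ℤ) - 1))
        ((2:ℝ) ^ (-(n : ℤ)) + (2:ℝ) ^ (-(2 * n : ℤ) - 1)),
        f x = (2:ℝ) ^ (-(2 * n : ℤ) - 1))
    (hf3 : ∀ n : ℕ, 3 ≤ n → ∀ x ∈ Set.Ico ((2:ℝ) ^ (-(n : ℤ)) + (2:ℝ) ^ (-(2 * n : ℤ) - 1))
        ((2:ℝ) ^ (-(n : ℤ)) + (2:ℝ) ^ (-(2 * n : ℤ))),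
        f x = -x + ((2:ℝ) ^ (-(2 * n : ℤ)) + (2:ℝ) ^ (-(n : ℤ))))
    (hf0 : ∀ x ∈ Set.Icc (0:ℝ) 1, (∀ n : ℕ, 3 ≤ n → x ∉ Jint n) → f x = 0) :
    (∀ m n : ℕ, 3 ≤ m → 3 ≤ n → m ≠ n → Disjoint (Jint m) (Jint n)) ∧
    ContinuousOn f (Set.Icc (0:ℝ) 1) ∧
    ∀ x ∈ Set.Icc (0:ℝ) 1, ∀ y ∈ Set.Icc (0:ℝ) 1, |f x - f y| ≤ |x - y| := by
  -- f agrees with gg on [0,1]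
  have key : ∀ x ∈ Set.Icc (0:ℝ) 1, f x = gg x := by
    intro x hx
    by_cases hex : ∃ n : ℕ, 3 ≤ n ∧ x ∈ Jint n
    · obtain ⟨n, hn3, hxn⟩ := hex
      rw [gg_eq_tt hn3 hxn]
      set P := (2:ℝ) ^ (-(n : ℤ)) with hP
      set W := (2:ℝ) ^ (-(2 * n : ℤ)) with hW
      set H := (2:ℝ) ^ (-(2 * n : ℤ) - 1) with hH
      have HW : H = W / 2 := by rw [hH, hW]; exact hh_eq n
      have Wpos : 0 < W := by rw [hW]; exact w_pos n
      have Hpos : 0 < H := by rw [hH]; exact hh_pos n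
      have taa : aa n = P - W := by rw [hP, hW]; rfl
      have tbb : bb n = P + W := by rw [hP, hW]; rfl
      have thh : hh n = H := by rw [hH]; rfl
      have hx1 : P - W < x := by rw [hP, hW]; exact hxn.1
      have hx2 : x < P + W := by rw [hP, hW]; exact hxn.2
      rcases le_or_gt x (P - H) with hc | hc
      · rw [hf1 n hn3 x (Set.mem_Ioc.2 ⟨by rw [← taa] at hx1 ⊢; exact hx1, hc⟩)]
        simp only [tt]
        rw [taa, tbb, thh]
        rw [min_eq_left (show x - (P - W) ≤ P + W - x by linarith),
          min_eq_left (show x - (P - W) ≤ H by linarith),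
          max_eq_right (show (0:ℝ) ≤ x - (P - W) by linarith)]
        ring
      · rcases lt_or_ge x (P + H) with hd | hd
        · rw [hf2 n hn3 x (Set.mem_Ioo.2 ⟨hc, hd⟩)]
          simp only [tt]
          rw [taa, tbb, thh]
          rw [min_eq_right (le_min (show H ≤ x - (P - W) by linarith)
              (show H ≤ P + W - x by linarith)),
            max_eq_right Hpos.le]
        · rw [hf3 n hn3 x (Set.mem_Ico.2 ⟨hd, hx2⟩)]
          simp only [tt]
          rw [taa, tbb, thh]
          rw [min_eq_right (show P + W - x ≤ x - (P - W) by linarith),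
            min_eq_left (show P + W - x ≤ H by linarith),
            max_eq_right (show (0:ℝ) ≤ P + W - x by linarith)]
          ring
    · push_neg at hex
      have hxn : ∀ n : ℕ, 3 ≤ n → x ∉ Jint n := fun n hn => hex n hn
      rw [hf0 x hx hxn, gg_eq_zero hxn]
  refine ⟨fun m n hm hn hmn => disj hm hn hmn, ?_, ?_⟩
  · exact (gg_lip.continuous.continuousOn).congr key
  · intro x hx y hy
    rw [key x hx, key y hy]
    have h := gg_lip.dist_le_mul x y
    rwa [Real.dist_eq, Real.dist_eq, NNReal.coe_one, one_mul] at h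
end

section
/- For a continuous function f : [0,1] → ℝ and ε > 0 with 0 < ε < 1/2, suppose 1 − ε ≤ f(x) < 1 for all x ∈ [0,1]. Then: (1) sup_x |f(x)| < 1; (2) for every continuous p : [0,1] → ℝ with sup_x |p(x)| > ε and sup_x |f(x) − p(x)| < 1, one has sup_x |f(x) + p(x)| ≥ 1. Conversely, if f is continuous with 0 < f(x) < 1 for all x and f(z) < 1 − ε for some z, then there exists a continuous p with sup_x |p(x)| > ε, sup_x |f(x) − p(x)| < 1, and sup_x |f(x) + p(x)| < 1. -/
/-- characterization of functions with 1 − ε ≤ f < 1 in C[0,1]. -/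
theorem stmt_17 (ε : ℝ) (hε1 : 0 < ε) (hε2 : ε < 1/2) :
    (∀ f : C(Set.Icc (0:ℝ) 1, ℝ), (∀ x, 1 - ε ≤ f x ∧ f x < 1) →
      ‖f‖ < 1 ∧
      ∀ p : C(Set.Icc (0:ℝ) 1, ℝ), ε < ‖p‖ → ‖f - p‖ < 1 → 1 ≤ ‖f + p‖) ∧
    (∀ f : C(Set.Icc (0:ℝ) 1, ℝ), (∀ x, 0 < f x ∧ f x < 1) →
      (∃ z, f z < 1 - ε) →
      ∃ p : C(Set.Icc (0:ℝ) 1, ℝ), ε < ‖p‖ ∧ ‖f - p‖ < 1 ∧ ‖f + p‖ < 1) := by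
  constructor
  · intro f hf
    have h1 : ‖f‖ < 1 := by
      rw [ContinuousMap.norm_lt_iff _ one_pos]
      intro x
      have hx := hf x
      rw [Real.norm_eq_abs, abs_lt]
      constructor <;> nlinarith [hx.1, hx.2]
    refine ⟨h1, fun p hp hfp => ?_⟩
    obtain ⟨x, hx⟩ : ∃ x, ε < |p x| := by
      by_contra hc
      push_neg at hc
      have : ‖p‖ ≤ ε := (ContinuousMap.norm_le p hε1.le).2 (fun x => by
        simpa [Real.norm_eq_abs] using hc x)
      linarith
    have hfx := hf x
    rcases le_or_gt 0 (p x) with h0 | h0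
    · rw [abs_of_nonneg h0] at hx
      have h2 : (1:ℝ) ≤ (f + p) x := by
        simp only [ContinuousMap.add_apply]; linarith [hfx.1]
      calc (1:ℝ) ≤ (f + p) x := h2
        _ ≤ |(f + p) x| := le_abs_self _
        _ ≤ ‖f + p‖ := by
            simpa [Real.norm_eq_abs] using (f + p).norm_coe_le_norm x
    · rw [abs_of_neg h0] at hx
      exfalso
      have h2 : (1:ℝ) < (f - p) x := by
        simp only [ContinuousMap.sub_apply]; linarith [hfx.1]
      have h3 : |(f - p) x| ≤ ‖f - p‖ := by
        simpa [Real.norm_eq_abs] using (f - p).norm_coe_le_norm x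
      have := le_abs_self ((f - p) x)
      linarith
  · rintro f hf ⟨z, hz⟩
    have ha : ε < 1 - f z := by linarith
    have ha0 : (0:ℝ) < 1 - f z := lt_trans hε1 ha
    set t : ℝ := (ε / (1 - f z) + 1) / 2 with ht
    have hq : ε / (1 - f z) < 1 := (div_lt_one ha0).2 ha
    have hq0 : 0 < ε / (1 - f z) := div_pos hε1 ha0
    have ht1 : t < 1 := by rw [ht]; linarith
    have ht2 : ε / (1 - f z) < t := by rw [ht]; linarith
    have ht0 : 0 < t := by rw [ht]; linarith
    refine ⟨t • ((1 : C(Set.Icc (0:ℝ) 1, ℝ)) - f), ?_, ?_, ?_⟩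
    · have hz2 : ε < t * (1 - f z) := by
        rw [div_lt_iff₀ ha0] at ht2; linarith
      calc ε < t * (1 - f z) := hz2
        _ ≤ |t * (1 - f z)| := le_abs_self _
        _ ≤ ‖t • ((1 : C(Set.Icc (0:ℝ) 1, ℝ)) - f)‖ := by
            simpa [Real.norm_eq_abs, mul_sub] using
              (t • ((1 : C(Set.Icc (0:ℝ) 1, ℝ)) - f)).norm_coe_le_norm z
    · rw [ContinuousMap.norm_lt_iff _ one_pos]
      intro x
      have hx := hf x
      simp only [ContinuousMap.sub_apply, ContinuousMap.smul_apply,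
        ContinuousMap.one_apply, smul_eq_mul, Real.norm_eq_abs]
      rw [abs_lt]
      constructor <;> nlinarith [hx.1, hx.2]
    · rw [ContinuousMap.norm_lt_iff _ one_pos]
      intro x
      have hx := hf x
      simp only [ContinuousMap.add_apply, ContinuousMap.sub_apply, ContinuousMap.smul_apply,
        ContinuousMap.one_apply, smul_eq_mul, Real.norm_eq_abs]
      rw [abs_lt]
      constructor <;> nlinarith [hx.1, hx.2]
end
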